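/- Let f, f₁, …, f_m be fix-actions such that f does not interfere with any of f₁, …, f_m. Let s be a network state such that f is applicable to s and the sequence f₁, …, f_m, f is applicable to s. Then the sequence f, f₁, …, f_m is also applicable to s, has the same total cost, and yields the same resulting state: s[f₁, …, f_m, f] = s[f, f₁, …, f_m]. -/

import Mathlib

/-- A fix-action over network propositions `P`: precondition and postcondition
are finite sets of literals (a literal is a pair of a proposition and a
polarity, `true` for a positive and `false` for a negative occurrence),
containing at most one literal per proposition, together with a strictly
positive real cost. -/
structure FixAction (P : Type*) where
  pre : Finset (P × Bool)
  post : Finset (P × Bool)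
  cost : ℝ
  cost_pos : 0 < cost
  pre_unique : ∀ (p : P) (b b' : Bool), (p, b) ∈ pre → (p, b') ∈ pre → b = b'
  post_unique : ∀ (p : P) (b b' : Bool), (p, b) ∈ post → (p, b') ∈ post → b = b'

variable {P : Type*} [DecidableEq P]

/-- A network state `s` satisfies a literal `(p, true)` iff `p ∈ s`,
and satisfies `(p, false)` iff `p ∉ s`. -/
def satLit (s : Finset P) (l : P × Bool) : Prop :=
  (l.1 ∈ s) ↔ l.2 = true

/-- A fix-action is applicable to a state if the state satisfies every
literal of its precondition. -/
def FixAction.applicable (f : FixAction P) (s : Finset P) : Prop :=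
  ∀ l ∈ f.pre, satLit s l

/-- The result `s[f]` of applying a fix-action: every proposition occurring
positively in `post f`, together with every proposition of `s` whose
negation does not occur in `post f`. -/
def FixAction.applyTo (f : FixAction P) (s : Finset P) : Finset P :=
  (f.post.filter (fun l => l.2 = true)).image Prod.fst ∪
    s.filter (fun p => (p, false) ∉ f.post)

/-- Applicability of a finite sequence of fix-actions to a state. -/
def seqApplicable (s : Finset P) : List (FixAction P) → Prop
  | [] => True
  | f :: σ => f.applicable s ∧ seqApplicable (f.applyTo s) σ

/-- The result `s[σ]` of applying a sequence of fix-actions. -/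
def seqApply (s : Finset P) : List (FixAction P) → Finset P
  | [] => s
  | f :: σ => seqApply (f.applyTo s) σ

/-- The cost of a sequence of fix-actions: the sum of the costs of its
elements. -/
noncomputable def seqCost (σ : List (FixAction P)) : ℝ :=
  (σ.map FixAction.cost).sum

/-- `f₁` disables `f₂` if some literal in `post f₁` is the negation of a
literal in `pre f₂`. -/
def disablesFix (f₁ f₂ : FixAction P) : Prop :=
  ∃ (p : P) (b : Bool), (p, b) ∈ f₁.post ∧ (p, !b) ∈ f₂.pre

/-- `f₁` and `f₂` conflict if some literal in `post f₁` is the negation of a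
literal in `post f₂`. -/
def conflictFix (f₁ f₂ : FixAction P) : Prop :=
  ∃ (p : P) (b : Bool), (p, b) ∈ f₁.post ∧ (p, !b) ∈ f₂.post

/-- `f₁` and `f₂` interfere if they conflict or either disables the other. -/
def interfereFix (f₁ f₂ : FixAction P) : Prop :=
  conflictFix f₁ f₂ ∨ disablesFix f₁ f₂ ∨ disablesFix f₂ f₁

lemma mem_applyTo (f : FixAction P) (s : Finset P) (p : P) :
    p ∈ f.applyTo s ↔ (p, true) ∈ f.post ∨ (p ∈ s ∧ (p, false) ∉ f.post) := by
  simp only [FixAction.applyTo, Finset.mem_union, Finset.mem_image, Finset.mem_filter]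
  constructor
  · rintro (⟨⟨a, b⟩, ⟨ha, hb⟩, rfl⟩ | ⟨h1, h2⟩)
    · cases hb; exact Or.inl ha
    · exact Or.inr ⟨h1, h2⟩
  · rintro (h | ⟨h1, h2⟩)
    · exact Or.inl ⟨(p, true), ⟨h, rfl⟩, rfl⟩
    · exact Or.inr ⟨h1, h2⟩

lemma applyTo_comm (f g : FixAction P) (h : ¬ conflictFix f g) (s : Finset P) :
    f.applyTo (g.applyTo s) = g.applyTo (f.applyTo s) := by
  ext p
  simp only [mem_applyTo]
  have h1 : ¬((p, true) ∈ f.post ∧ (p, false) ∈ g.post) :=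
    fun ⟨a, b⟩ => h ⟨p, true, a, b⟩
  have h2 : ¬((p, false) ∈ f.post ∧ (p, true) ∈ g.post) :=
    fun ⟨a, b⟩ => h ⟨p, false, a, b⟩
  tauto

lemma applicable_preserved (f g : FixAction P) (h : ¬ disablesFix g f)
    (s : Finset P) (hf : f.applicable s) : f.applicable (g.applyTo s) := by
  intro l hl
  have hs := hf l hl
  have hnd : (l.1, !l.2) ∉ g.post :=
    fun hm => h ⟨l.1, !l.2, hm, by simpa using hl⟩
  obtain ⟨p, b⟩ := l
  cases b
  · simp only [satLit] at hs ⊢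
    simp only [Bool.not_false] at hnd
    simp only [mem_applyTo]
    simp only [iff_false, Bool.false_eq_true] at hs ⊢
    tauto
  · simp only [satLit, iff_true] at hs ⊢
    simp only [Bool.not_true] at hnd
    rw [mem_applyTo]
    exact Or.inr ⟨hs, hnd⟩

/-- If `f` does not interfere with any action of the sequence `σ = f₁,…,f_m`,
`f` is applicable to `s`, and `σ ++ [f]` is applicable to `s`, then the
sequence `f :: σ` is also applicable to `s`, has the same total cost, and
yields the same resulting state. -/
theorem noninterfering_action_moves_to_front
    {P : Type*} [DecidableEq P]
    (f : FixAction P) (σ : List (FixAction P))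
    (hni : ∀ g ∈ σ, ¬ interfereFix f g)
    (s : Finset P) (hf : f.applicable s)
    (happ : seqApplicable s (σ ++ [f])) :
    seqApplicable s (f :: σ) ∧
    seqCost (f :: σ) = seqCost (σ ++ [f]) ∧
    seqApply s (σ ++ [f]) = seqApply s (f :: σ) := by
  have key : seqApplicable s (f :: σ) ∧ seqApply s (σ ++ [f]) = seqApply s (f :: σ) := by
    induction σ generalizing s with
    | nil => exact ⟨⟨hf, trivial⟩, rfl⟩
    | cons g σ' ih =>
      have hg : ¬ interfereFix f g := hni g List.mem_cons_self
      have hni' : ∀ g' ∈ σ', ¬ interfereFix f g' := fun g' h' => hni g' (List.mem_cons_of_mem _ h')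
      have hnc : ¬ conflictFix f g := fun h => hg (Or.inl h)
      have hnd1 : ¬ disablesFix f g := fun h => hg (Or.inr (Or.inl h))
      have hnd2 : ¬ disablesFix g f := fun h => hg (Or.inr (Or.inr h))
      obtain ⟨hgs, happ'⟩ := happ
      have hfg : f.applicable (g.applyTo s) := applicable_preserved f g hnd2 s hf
      obtain ⟨ihapp, iheq⟩ := ih hni' (g.applyTo s) hfg happ'
      obtain ⟨_, ihapp'⟩ := ihapp
      have hcomm := applyTo_comm f g hnc s
      refine ⟨⟨hf, applicable_preserved g f hnd1 s hgs, ?_⟩, ?_⟩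
      · show seqApplicable (g.applyTo (f.applyTo s)) σ'
        rw [← hcomm]; exact ihapp'
      · show seqApply (g.applyTo s) (σ' ++ [f]) = seqApply (g.applyTo (f.applyTo s)) σ'
        rw [← hcomm]; exact iheq
  exact ⟨key.1, by simp [seqCost]; ring, key.2⟩
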